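/- Let b ∈ ℝ, v ∈ ℝ^n, and C := {x ∈ Δ_n : ⟨x, v⟩ ≥ b}, and assume C ∩ ℝ^n_{++} ≠ ∅. Let z ∈ ℝ^n_{++} and suppose ẑ ∈ C ∩ ℝ^n_{++} is a minimizer over C of x ↦ D_f(x, z) = Σ_k x_k log(x_k/z_k) − Σ_k x_k + Σ_k z_k. Then there exists a pair (λ, ν) ∈ ℝ_+ × ℝ such that ẑ_k = e^{λ·v_k + ν}·z_k for all k ∈ {1,…,n}, and moreover if b < ⟨ẑ, v⟩ then λ = 0. -/

import Mathlib

/-- The Bregman distance associated with the negative entropy: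
`D_f(x,y) = ∑_k x_k log(x_k / y_k) − ∑_k x_k + ∑_k y_k`. -/
noncomputable def Df (n : ℕ) (x y : Fin n → ℝ) : ℝ :=
  ∑ k, x k * Real.log (x k / y k) - ∑ k, x k + ∑ k, y k

open Filter Set

/-- Auxiliary: right derivative nonneg at a right-local min. -/
lemma aux_slope (φ : ℝ → ℝ) (L : ℝ) (h : HasDerivAt φ L 0)
    (hmin : ∀ᶠ t in nhdsWithin (0:ℝ) (Set.Ioi 0), φ 0 ≤ φ t) : 0 ≤ L := by
  rw [hasDerivAt_iff_tendsto_slope] at h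
  have h2 : Tendsto (slope φ 0) (nhdsWithin (0:ℝ) (Set.Ioi 0)) (nhds L) :=
    h.mono_left (nhdsWithin_mono _ (fun x hx => ne_of_gt hx))
  refine ge_of_tendsto h2 ?_
  filter_upwards [hmin, self_mem_nhdsWithin] with t ht ht'
  have h0 : (0:ℝ) < t := ht'
  have : slope φ 0 t = (φ t - φ 0) / (t - 0) := slope_def_field φ 0 t
  rw [this]
  apply div_nonneg <;> linarith

/-- Auxiliary sums of 3-point directions. -/
lemma aux_tri {n : ℕ} (k p q : Fin n) (c1 c2 c3 : ℝ) (w : Fin n → ℝ) :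
    ∑ j, (c1 * (if j = k then (1:ℝ) else 0) + c2 * (if j = p then 1 else 0)
      + c3 * (if j = q then 1 else 0)) * w j = c1 * w k + c2 * w p + c3 * w q := by
  simp [add_mul, Finset.sum_add_distrib, ite_mul, mul_ite, mul_assoc]

lemma aux_tri' {n : ℕ} (k p q : Fin n) (c1 c2 c3 : ℝ) :
    ∑ j, (c1 * (if j = k then (1:ℝ) else 0) + c2 * (if j = p then 1 else 0)
      + c3 * (if j = q then 1 else 0)) = c1 + c2 + c3 := by
  have := aux_tri k p q c1 c2 c3 (fun _ => 1)
  simpa using this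

lemma aux_exp {x z : ℝ} (hx : 0 < x) (hz : 0 < z) {c : ℝ}
    (h : Real.log x - Real.log z = c) : x = Real.exp c * z := by
  rw [← h, Real.exp_sub, Real.exp_log hx, Real.exp_log hz]
  field_simp

/-- The workhorse: directional-derivative inequality at the minimizer. -/
lemma aux_dir (n : ℕ) (b : ℝ) (v : Fin n → ℝ)
    (C : Set (Fin n → ℝ))
    (hC : C = {x | (∀ k, 0 ≤ x k) ∧ (∑ k, x k = 1) ∧ b ≤ ∑ k, x k * v k})
    (z : Fin n → ℝ) (hz : ∀ k, 0 < z k)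
    (zhat : Fin n → ℝ) (hzhatC : zhat ∈ C) (hzhatpos : ∀ k, 0 < zhat k)
    (hmin : ∀ x ∈ C, Df n zhat z ≤ Df n x z)
    (d : Fin n → ℝ) (hd : ∑ k, d k = 0)
    (hcase : 0 ≤ ∑ k, d k * v k ∨ b < ∑ k, zhat k * v k) :
    0 ≤ ∑ k, d k * (Real.log (zhat k) - Real.log (z k)) := by
  classical
  subst hC
  set a : Fin n → ℝ := fun k => Real.log (zhat k) - Real.log (z k) with ha
  set φ : ℝ → ℝ := fun t => Df n (fun k => zhat k + t * d k) z with hφ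
  -- eventual positivity of all coordinates
  have hposall : ∀ᶠ t in nhds (0:ℝ), ∀ k, 0 < zhat k + t * d k := by
    rw [eventually_all]
    intro k
    have hc : Continuous (fun t : ℝ => zhat k + t * d k) := by continuity
    have h0 : (0:ℝ) < zhat k + 0 * d k := by simpa using hzhatpos k
    exact hc.continuousAt.eventually (eventually_gt_nhds h0)
  -- affine derivative
  have haff : ∀ k : Fin n, HasDerivAt (fun t : ℝ => zhat k + t * d k) (d k) 0 := by
    intro k
    simpa using ((hasDerivAt_id (0:ℝ)).mul_const (d k)).const_add (zhat k)
  -- derivative of each entropy term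
  have hterm : ∀ k : Fin n, HasDerivAt (fun t : ℝ =>
      (zhat k + t * d k) * Real.log (zhat k + t * d k)
        - (zhat k + t * d k) * Real.log (z k)) (d k * a k + d k) 0 := by
    intro k
    have h1 : HasDerivAt (fun t : ℝ => (zhat k + t * d k) * Real.log (zhat k + t * d k))
        ((Real.log (zhat k + 0 * d k) + 1) * d k) 0 := by
      have hne : zhat k + 0 * d k ≠ 0 := by simpa using (hzhatpos k).ne'
      exact (Real.hasDerivAt_mul_log hne).comp 0 (haff k)
    have h2 := (haff k).mul_const (Real.log (z k))
    have h3 := h1.sub h2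
    have heq : d k * a k + d k
        = (Real.log (zhat k + 0 * d k) + 1) * d k - d k * Real.log (z k) := by
      simp only [ha, zero_mul, add_zero]
      ring
    rw [heq]
    exact h3
  -- derivative of the smooth surrogate
  set ψ : ℝ → ℝ := fun t => (∑ k, ((zhat k + t * d k) * Real.log (zhat k + t * d k)
      - (zhat k + t * d k) * Real.log (z k))) - (∑ k, (zhat k + t * d k)) + ∑ k, z k
    with hψ
  have hψd : HasDerivAt ψ (∑ k, a k * d k) 0 := by
    have hA : HasDerivAt (fun t : ℝ => ∑ k, ((zhat k + t * d k) * Real.log (zhat k + t * d k)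
        - (zhat k + t * d k) * Real.log (z k))) (∑ k, (d k * a k + d k)) 0 :=
      HasDerivAt.fun_sum (fun k _ => hterm k)
    have hB : HasDerivAt (fun t : ℝ => ∑ k, (zhat k + t * d k)) (∑ k, d k) 0 :=
      HasDerivAt.fun_sum (fun k _ => haff k)
    have h := (hA.sub hB).add_const (∑ k, z k)
    have heq : (∑ k, (d k * a k + d k)) - ∑ k, d k = ∑ k, a k * d k := by
      rw [Finset.sum_add_distrib]
      have : ∑ k, d k * a k = ∑ k, a k * d k := by
        apply Finset.sum_congr rfl; intro k _; ring
      rw [this]; ring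
    rw [← heq]
    exact h
  -- φ agrees with ψ near 0
  have hEq : φ =ᶠ[nhds (0:ℝ)] ψ := by
    filter_upwards [hposall] with t ht
    simp only [hφ, hψ, Df]
    congr 1
    congr 1
    apply Finset.sum_congr rfl
    intro k _
    rw [Real.log_div (ht k).ne' (hz k).ne', mul_sub]
  have hderiv : HasDerivAt φ (∑ k, a k * d k) 0 := hψd.congr_of_eventuallyEq hEq
  -- feasibility
  have hfeas : ∀ᶠ t in nhdsWithin (0:ℝ) (Set.Ioi 0),
      (fun k => zhat k + t * d k) ∈ {x : Fin n → ℝ | (∀ k, 0 ≤ x k) ∧ (∑ k, x k = 1)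
        ∧ b ≤ ∑ k, x k * v k} := by
    have hsum : ∀ t : ℝ, ∑ k, (zhat k + t * d k) = 1 := by
      intro t
      rw [Finset.sum_add_distrib, hzhatC.2.1, ← Finset.mul_sum, hd]
      ring
    have hvsum : ∀ t : ℝ, ∑ k, (zhat k + t * d k) * v k
        = (∑ k, zhat k * v k) + t * ∑ k, d k * v k := by
      intro t
      rw [Finset.mul_sum, ← Finset.sum_add_distrib]
      apply Finset.sum_congr rfl; intro k _; ring
    have hcons : ∀ᶠ t in nhdsWithin (0:ℝ) (Set.Ioi 0),
        b ≤ ∑ k, (zhat k + t * d k) * v k := by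
      rcases hcase with h | h
      · filter_upwards [self_mem_nhdsWithin] with t ht
        have ht0 : (0:ℝ) < t := ht
        rw [hvsum]
        have := hzhatC.2.2
        nlinarith
      · have hc : Continuous (fun t : ℝ => (∑ k, zhat k * v k) + t * ∑ k, d k * v k) := by
          continuity
        have h0 : b < (∑ k, zhat k * v k) + 0 * ∑ k, d k * v k := by simpa using h
        have hev : ∀ᶠ t in nhds (0:ℝ),
            b < (∑ k, zhat k * v k) + t * ∑ k, d k * v k :=
          hc.continuousAt.eventually (eventually_gt_nhds h0)
        filter_upwards [hev.filter_mono nhdsWithin_le_nhds] with t ht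
        rw [hvsum]
        exact le_of_lt ht
    filter_upwards [hposall.filter_mono nhdsWithin_le_nhds, hcons] with t ht hc
    exact ⟨fun k => (ht k).le, hsum t, hc⟩
  -- conclude
  have hminev : ∀ᶠ t in nhdsWithin (0:ℝ) (Set.Ioi 0), φ 0 ≤ φ t := by
    filter_upwards [hfeas] with t ht
    have h0 : φ 0 = Df n zhat z := by
      simp only [hφ, zero_mul, add_zero]
    rw [h0]
    exact hmin _ ht
  have := aux_slope φ _ hderiv hminev
  calc (0:ℝ) ≤ ∑ k, a k * d k := this
    _ = ∑ k, d k * (Real.log (zhat k) - Real.log (z k)) := by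
        apply Finset.sum_congr rfl; intro k _; simp only [ha]; ring

theorem stmt_15 (n : ℕ) (b : ℝ) (v : Fin n → ℝ)
    (C : Set (Fin n → ℝ))
    (hC : C = {x | (∀ k, 0 ≤ x k) ∧ (∑ k, x k = 1) ∧ b ≤ ∑ k, x k * v k})
    (hCpos : ∃ w ∈ C, ∀ k, 0 < w k)
    (z : Fin n → ℝ) (hz : ∀ k, 0 < z k)
    (zhat : Fin n → ℝ) (hzhatC : zhat ∈ C) (hzhatpos : ∀ k, 0 < zhat k)
    (hmin : ∀ x ∈ C, Df n zhat z ≤ Df n x z) :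
    ∃ lam nu : ℝ, 0 ≤ lam ∧
      (∀ k, zhat k = Real.exp (lam * v k + nu) * z k) ∧
      (b < ∑ k, zhat k * v k → lam = 0) := by
  classical
  set a : Fin n → ℝ := fun k => Real.log (zhat k) - Real.log (z k) with ha
  -- trivial case n = 0
  rcases Nat.eq_zero_or_pos n with hn | hn
  · subst hn
    exact ⟨0, 0, le_refl 0, fun k => k.elim0, fun _ => rfl⟩
  set i0 : Fin n := ⟨0, hn⟩ with hi0
  -- pair directions give equality of a when feasible in both directions
  have hpair : ∀ (j k : Fin n),
      (0 ≤ v j - v k ∨ b < ∑ m, zhat m * v m) → 0 ≤ a j - a k := by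
    intro j k hcase
    set d : Fin n → ℝ := fun m => (1:ℝ) * (if m = j then 1 else 0)
      + (-1) * (if m = k then 1 else 0) + 0 * (if m = i0 then 1 else 0) with hdm
    have hd : ∑ m, d m = 0 := by rw [hdm, aux_tri']; ring
    have hdv : ∑ m, d m * v m = v j - v k := by rw [hdm, aux_tri]; ring
    have := aux_dir n b v C hC z hz zhat hzhatC hzhatpos hmin d hd
      (by rcases hcase with h | h
          · left; rw [hdv]; exact h
          · right; exact h)
    have hda : ∑ m, d m * (Real.log (zhat m) - Real.log (z m)) = a j - a k := by
      rw [hdm, aux_tri]; simp only [ha]; ring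
    rw [hda] at this
    exact this
  by_cases hlt : b < ∑ k, zhat k * v k
  · -- inactive constraint: a is constant
    refine ⟨0, a i0, le_refl 0, ?_, fun _ => rfl⟩
    intro k
    have h1 := hpair k i0 (Or.inr hlt)
    have h2 := hpair i0 k (Or.inr hlt)
    have hak : a k = a i0 := by linarith
    apply aux_exp (hzhatpos k) (hz k)
    show a k = 0 * v k + a i0
    rw [hak]; ring
  · -- active constraint
    by_cases hvc : ∀ j k : Fin n, v j = v k
    · -- v constant: a constant again
      refine ⟨0, a i0, le_refl 0, ?_, fun _ => rfl⟩
      intro k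
      have h1 := hpair k i0 (Or.inl (by rw [hvc k i0]; simp))
      have h2 := hpair i0 k (Or.inl (by rw [hvc i0 k]; simp))
      have hak : a k = a i0 := by linarith
      apply aux_exp (hzhatpos k) (hz k)
      show a k = 0 * v k + a i0
      rw [hak]; ring
    · push_neg at hvc
      obtain ⟨p', q', hpq'⟩ := hvc
      obtain ⟨p, q, hvpq⟩ : ∃ p q : Fin n, v q < v p := by
        rcases lt_or_gt_of_ne hpq' with h | h
        · exact ⟨q', p', h⟩
        · exact ⟨p', q', h⟩
      have hne : v p - v q ≠ 0 := by linarith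
      set lam : ℝ := (a p - a q) / (v p - v q) with hlam
      set nu : ℝ := a p - lam * v p with hnu
      have hlamnn : 0 ≤ lam := by
        have := hpair p q (Or.inl (by linarith))
        apply div_nonneg this (by linarith)
      refine ⟨lam, nu, hlamnn, ?_, fun h => absurd h hlt⟩
      intro k
      -- triple direction with zero ⟨d,v⟩
      set α : ℝ := (v q - v k) / (v p - v q) with hα
      set β : ℝ := (v k - v p) / (v p - v q) with hβ
      have htriple : a k + α * a p + β * a q = 0 := by
        have mk : ∀ (c1 c2 c3 : ℝ), c1 + c2 + c3 = 0 → c1 * v k + c2 * v p + c3 * v q = 0 →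
            0 ≤ c1 * a k + c2 * a p + c3 * a q := by
          intro c1 c2 c3 hs hv
          set d : Fin n → ℝ := fun m => c1 * (if m = k then 1 else 0)
            + c2 * (if m = p then 1 else 0) + c3 * (if m = q then 1 else 0) with hdm
          have hd : ∑ m, d m = 0 := by rw [hdm, aux_tri']; exact hs
          have := aux_dir n b v C hC z hz zhat hzhatC hzhatpos hmin d hd
            (Or.inl (by rw [hdm, aux_tri]; rw [hv]))
          have hda : ∑ m, d m * (Real.log (zhat m) - Real.log (z m))
              = c1 * a k + c2 * a p + c3 * a q := by
            rw [hdm, aux_tri]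
          rw [hda] at this
          exact this
        have hs1 : (1:ℝ) + α + β = 0 := by
          rw [hα, hβ]; field_simp; ring
        have hv1 : (1:ℝ) * v k + α * v p + β * v q = 0 := by
          rw [hα, hβ]; field_simp; ring
        have h1 := mk 1 α β hs1 hv1
        have h2 := mk (-1) (-α) (-β) (by linarith) (by linarith)
        have : (1:ℝ) * a k + α * a p + β * a q = 0 := by linarith
        linarith [this]
      apply aux_exp (hzhatpos k) (hz k)
      show a k = lam * v k + nu
      rw [hlam, hnu, hα, hβ] at *
      field_simp at htriple ⊢
      linear_combination htriple
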